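/- For the overparameterized linear model with Dropout, the implicit regularizer is a weighted L² penalty: let w = (u, v) with u, v ∈ ℝ^{d_in}, define f_w^drop(x, η) = ⟨u^{⊙2} − v^{⊙2}, x ⊙ (1+η)⟩ and L̂(w, η) = (1/N) Σ_{i=1}^N (f_w^drop(x_i, η) − y_i)². Then (1/2) Δ_η L̂(w, 0) = (1/N) Σ_{j=1}^{d_in} (u_j² − v_j²)² Σ_{i=1}^N x_{ij}², where x_{ij} is the j-th coordinate of x_i. -/

import Mathlib

lemma quad_iteratedDeriv (a b c : ℝ) (x : ℝ) :
    iteratedDeriv 2 (fun t : ℝ => a + b * t + c * t ^ 2) x = 2 * c := by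
  have h1 : ∀ t : ℝ, HasDerivAt (fun s : ℝ => a + b * s + c * s ^ 2)
      (b + c * (2 * t)) t := by
    intro t
    have hb : HasDerivAt (fun s : ℝ => a + b * s) (b) t := by
      simpa using ((hasDerivAt_id t).const_mul b).const_add a
    have hc : HasDerivAt (fun s : ℝ => c * s ^ 2) (c * (2 * t)) t := by
      simpa using (hasDerivAt_pow 2 t).const_mul c
    exact hb.add hc
  have hd1 : deriv (fun s : ℝ => a + b * s + c * s ^ 2)
      = fun t : ℝ => b + c * (2 * t) := by
    funext t; exact (h1 t).deriv
  have h2 : ∀ t : ℝ, HasDerivAt (fun s : ℝ => b + c * (2 * s)) (2 * c) t := by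
    intro t
    simpa [mul_comm] using (((hasDerivAt_id t).const_mul (2:ℝ)).const_mul c).const_add b
  rw [iteratedDeriv_succ, iteratedDeriv_one, hd1]
  exact (h2 x).deriv

/-- **Dropout regularizer for overparameterized linear models.**
With `f_w^drop(x, η) = ⟨u^{⊙2} - v^{⊙2}, x ⊙ (1+η)⟩` and
`L̂(w, η) = (1/N) ∑ i (f_w^drop(x_i, η) - y_i)²`, the half `η`-Laplacian at `η = 0`
is `(1/2) Δ_η L̂(w, 0) = (1/N) ∑ j (u_j² - v_j²)² ∑ i x_{ij}²`. -/
theorem olm_dropout_regularizer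
    {din N : ℕ} (hN : 0 < N)
    (u v : Fin din → ℝ) (x : Fin N → Fin din → ℝ) (y : Fin N → ℝ)
    (Lhat : (Fin din → ℝ) → ℝ)
    (hLhat : ∀ η, Lhat η =
      (1 / (N : ℝ)) * ∑ i,
        ((∑ j, ((u j) ^ 2 - (v j) ^ 2) * (x i j * (1 + η j))) - y i) ^ 2) :
    (1 / 2) * ∑ j, iteratedDeriv 2 (fun t => Lhat (Pi.single j t)) 0 =
      (1 / (N : ℝ)) * ∑ j, ((u j) ^ 2 - (v j) ^ 2) ^ 2 * ∑ i, (x i j) ^ 2 := by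
  set c : Fin din → ℝ := fun j => (u j) ^ 2 - (v j) ^ 2 with hc
  set S : Fin N → ℝ := fun i => ∑ k, c k * x i k with hS
  have key : ∀ j : Fin din,
      iteratedDeriv 2 (fun t => Lhat (Pi.single j t)) 0
        = 2 * ((1 / (N : ℝ)) * ∑ i, (c j * x i j) ^ 2) := by
    intro j
    have hfun : (fun t => Lhat (Pi.single j t)) =
        (fun t : ℝ => ((1 / (N : ℝ)) * ∑ i, (S i - y i) ^ 2)
          + ((1 / (N : ℝ)) * ∑ i, 2 * (S i - y i) * (c j * x i j)) * t
          + ((1 / (N : ℝ)) * ∑ i, (c j * x i j) ^ 2) * t ^ 2) := by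
      funext t
      rw [hLhat]
      have hinner : ∀ i : Fin N,
          (∑ k, c k * (x i k * (1 + (Pi.single j t : Fin din → ℝ) k)))
            = S i + c j * x i j * t := by
        intro i
        have : ∀ k : Fin din, c k * (x i k * (1 + (Pi.single j t : Fin din → ℝ) k))
            = c k * x i k + (if k = j then c k * x i k * t else 0) := by
          intro k
          rcases eq_or_ne k j with h | h
          · subst h; simp [Pi.single_apply]; ring
          · simp [Pi.single_apply, h]
        rw [Finset.sum_congr rfl (fun k _ => this k), Finset.sum_add_distrib,
          Finset.sum_ite_eq' Finset.univ j (fun k => c k * x i k * t)]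
        simp [hS]
      simp only [show ∀ i : Fin N, (∑ k, ((u k) ^ 2 - (v k) ^ 2) * (x i k * (1 + (Pi.single j t : Fin din → ℝ) k))) = S i + c j * x i j * t from hinner]
      have hsq : ∀ i : Fin N, (S i + c j * x i j * t - y i) ^ 2
          = (S i - y i) ^ 2 + 2 * (S i - y i) * (c j * x i j) * t
            + (c j * x i j) ^ 2 * t ^ 2 := by
        intro i; ring
      rw [Finset.sum_congr rfl (fun i _ => hsq i), Finset.sum_add_distrib,
        Finset.sum_add_distrib, ← Finset.sum_mul, ← Finset.sum_mul]
      ring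
    rw [hfun, quad_iteratedDeriv]
  rw [Finset.sum_congr rfl (fun j _ => key j), Finset.mul_sum, Finset.mul_sum]
  refine Finset.sum_congr rfl (fun j _ => ?_)
  have h1 : (∑ i, (c j * x i j) ^ 2) = c j ^ 2 * ∑ i, x i j ^ 2 := by
    rw [Finset.mul_sum]; exact Finset.sum_congr rfl fun i _ => by ring
  rw [h1]; simp only [hc]; ring
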